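/- Let H = F_2^n with dim H = n, let U ⊆ H with density δ_U > 0, and let 0 < t, u < 1 with n ≥ 10/(t u²). Then there exists a partition P of H into affine subspaces, each of dimension at least n − 4/(t u²), and a subcollection N ⊆ P, such that for every V ∈ P \ N the set U ∩ V is u-uniform relative to V (i.e., ‖U ∩ V‖_Uni, computed via the Fourier transform on the subspace parallel to V, is at most u), and the union of the cells in N has density at most t·δ_U in H. -/

import Mathlib

open Finset

noncomputable section

/-- The group `F_2^n`. -/
abbrev H (n : ℕ) : Type := Fin n → ZMod 2

/-- The character `x ↦ (-1)^{x·ξ}`. -/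
def chr {n : ℕ} (x ξ : H n) : ℝ := (-1 : ℝ) ^ ((∑ i, x i * ξ i).val)

/-- Indicator function of a finite subset of `F_2^n`. -/
def ind {n : ℕ} (X : Finset (H n)) (x : H n) : ℝ := if x ∈ X then 1 else 0

/-- Fourier transform on `F_2^n`. -/
def fhat {n : ℕ} (f : H n → ℝ) (ξ : H n) : ℝ := ∑ x, f x * chr x ξ

/-- Density of `X` in `F_2^n`. -/
def density {n : ℕ} (X : Finset (H n)) : ℝ := (X.card : ℝ) / (Fintype.card (H n) : ℝ)

/-- Average of `f` over `F_2^n`. -/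
def havg {n : ℕ} (f : H n → ℝ) : ℝ := (∑ x, f x) / (Fintype.card (H n) : ℝ)

/-- Uniformity norm: the largest normalized nonzero Fourier coefficient. -/
def uniNorm {n : ℕ} (X : Finset (H n)) : ℝ :=
  ⨆ ξ : {ξ : H n // ξ ≠ 0}, |fhat (ind X) ξ.1| / (Fintype.card (H n) : ℝ)
/-- Dot product on `F_2^n`. -/
def dotp {n : ℕ} (x ξ : H n) : ZMod 2 := ∑ i, x i * ξ i

/-- Uniformity norm of a set `X` contained in the affine subspace `v + W`,
relative to that affine subspace: the sup over characters `ξ` that are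
nontrivial on `W` of the normalized Fourier coefficient of `X` based at `v`. -/
def relUniNorm {n : ℕ} (X : Finset (H n)) (W : Submodule (ZMod 2) (H n)) (v : H n) : ℝ :=
  ⨆ ξ : {ξ : H n // ∃ w ∈ W, dotp w ξ ≠ 0},
    |∑ x ∈ X, chr (x - v) ξ.1| / (Nat.card W : ℝ)

open Classical
namespace Stmt15
variable {n : ℕ}
lemma zmod2_cases (a : ZMod 2) : a = 0 ∨ a = 1 := by revert a; decide
def dotL (ξ : H n) : H n →ₗ[ZMod 2] ZMod 2 where
  toFun x := dotp x ξ
  map_add' x y := by simp [dotp, add_mul, Finset.sum_add_distrib]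
  map_smul' c x := by simp [dotp, Finset.mul_sum, mul_assoc]
def acoset (W : Submodule (ZMod 2) (H n)) (v : H n) : Finset (H n) :=
  Finset.univ.filter (fun x => x - v ∈ W)
lemma mem_acoset {W : Submodule (ZMod 2) (H n)} {v x : H n} :
    x ∈ acoset W v ↔ x - v ∈ W := by simp [acoset]
def IsRep (C : Finset (H n)) (W : Submodule (ZMod 2) (H n)) (v : H n) : Prop :=
  ∀ x, x ∈ C ↔ x - v ∈ W
lemma isRep_acoset (W : Submodule (ZMod 2) (H n)) (v : H n) : IsRep (acoset W v) W v :=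
  fun _ => mem_acoset
lemma IsRep.eq_acoset {C : Finset (H n)} {W : Submodule (ZMod 2) (H n)} {v : H n}
    (h : IsRep C W v) : C = acoset W v := by
  ext x; rw [h x, mem_acoset]
lemma IsRep.mem_base {C : Finset (H n)} {W : Submodule (ZMod 2) (H n)} {v : H n}
    (h : IsRep C W v) : v ∈ C := by rw [h v]; simp
lemma acoset_card (W : Submodule (ZMod 2) (H n)) (v : H n) :
    (acoset W v).card = Nat.card W := by
  have e : {x : H n // x - v ∈ W} ≃ W :=
    { toFun := fun x => ⟨x.1 - v, x.2⟩
      invFun := fun w => ⟨(w : H n) + v, by simp⟩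
      left_inv := fun x => by ext1; simp
      right_inv := fun w => by ext1; simp }
  rw [acoset, ← Fintype.card_subtype, Nat.card_eq_fintype_card, Fintype.card_congr e]
lemma IsRep.card {C : Finset (H n)} {W : Submodule (ZMod 2) (H n)} {v : H n}
    (h : IsRep C W v) : C.card = Nat.card W := by rw [h.eq_acoset, acoset_card]

lemma split {C : Finset (H n)} {W : Submodule (ZMod 2) (H n)} {v : H n}
    (hC : IsRep C W v) {X : Finset (H n)} (hX : X ⊆ C) {u : ℝ} (hu : 0 < u)
    (hbad : u < relUniNorm X W v) :
    ∃ (C₁ C₂ : Finset (H n)) (W' : Submodule (ZMod 2) (H n)) (v₁ v₂ : H n),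
      IsRep C₁ W' v₁ ∧ IsRep C₂ W' v₂ ∧ Disjoint C₁ C₂ ∧ C₁ ∪ C₂ = C ∧
      Module.finrank (ZMod 2) W' + 1 = Module.finrank (ZMod 2) W ∧
      (X.card : ℝ)^2 / (C.card : ℝ) + u^2 * C.card ≤
        ((X ∩ C₁).card : ℝ)^2 / (C₁.card : ℝ) + ((X ∩ C₂).card : ℝ)^2 / (C₂.card : ℝ) := by
  -- nonempty index type
  have hne : Nonempty {ξ : H n // ∃ w ∈ W, dotp w ξ ≠ 0} := by
    by_contra h
    rw [not_nonempty_iff] at h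
    rw [relUniNorm, Real.iSup_of_isEmpty] at hbad
    linarith
  rw [relUniNorm] at hbad
  obtain ⟨ξ, hξ⟩ := exists_lt_of_lt_ciSup hbad
  obtain ⟨w₁, hw₁W, hw₁⟩ := ξ.2
  have hw1 : dotp w₁ ξ.1 = 1 := (zmod2_cases _).resolve_left hw₁
  set L : H n →ₗ[ZMod 2] ZMod 2 := dotL ξ.1 with hL
  have hLd : ∀ x, L x = dotp x ξ.1 := fun _ => rfl
  set LW : W →ₗ[ZMod 2] ZMod 2 := L.comp W.subtype with hLW
  set W' : Submodule (ZMod 2) (H n) := (LinearMap.ker LW).map W.subtype with hW'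
  have mem_W' : ∀ x, x ∈ W' ↔ x ∈ W ∧ dotp x ξ.1 = 0 := by
    intro x
    constructor
    · rintro ⟨⟨y, hy⟩, hk, rfl⟩
      exact ⟨hy, hk⟩
    · rintro ⟨hxW, hx0⟩
      exact ⟨⟨x, hxW⟩, hx0, rfl⟩
  -- finrank
  have hsurj : Function.Surjective LW := by
    intro c
    rcases zmod2_cases c with rfl | rfl
    · exact ⟨0, map_zero _⟩
    · exact ⟨⟨w₁, hw₁W⟩, hw1⟩
  have hrank : Module.finrank (ZMod 2) W' + 1 = Module.finrank (ZMod 2) W := by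
    have h1 : Module.finrank (ZMod 2) (LinearMap.range LW) +
        Module.finrank (ZMod 2) (LinearMap.ker LW) = Module.finrank (ZMod 2) W :=
      LinearMap.finrank_range_add_finrank_ker LW
    rw [LinearMap.range_eq_top.mpr hsurj, finrank_top, Module.finrank_self] at h1
    rw [hW', Submodule.finrank_map_subtype_eq]
    omega
  set C₁ := acoset W' v with hC₁
  set C₂ := acoset W' (v + w₁) with hC₂
  have hdisj : Disjoint C₁ C₂ := by
    rw [Finset.disjoint_left]
    intro x h1 h2
    rw [hC₁, mem_acoset] at h1
    rw [hC₂, mem_acoset] at h2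
    have hsub : (x - v) - (x - (v + w₁)) ∈ W' := W'.sub_mem h1 h2
    have hmem : w₁ ∈ W' := by convert hsub using 1; abel
    rw [mem_W'] at hmem
    exact hw₁ hmem.2
  have hunion : C₁ ∪ C₂ = C := by
    ext x
    rw [Finset.mem_union, hC₁, hC₂, mem_acoset, mem_acoset, hC x, mem_W', mem_W']
    constructor
    · rintro (⟨h, -⟩ | ⟨h, -⟩)
      · exact h
      · have h2 : (x - (v + w₁)) + w₁ ∈ W := W.add_mem h hw₁W
        convert h2 using 1; abel
    · intro hxW
      have hx' : x - (v + w₁) ∈ W := by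
        have h2 : (x - v) - w₁ ∈ W := W.sub_mem hxW hw₁W
        convert h2 using 1; abel
      rcases zmod2_cases (dotp (x - v) ξ.1) with h0 | h1
      · exact Or.inl ⟨hxW, h0⟩
      · refine Or.inr ⟨hx', ?_⟩
        have hadd : dotp (x - v) ξ.1 = dotp (x - (v + w₁)) ξ.1 + dotp w₁ ξ.1 := by
          rw [← hLd, ← hLd, ← hLd, ← map_add]
          congr 1; abel
        rw [h1, hw1] at hadd
        rcases zmod2_cases (dotp (x - (v + w₁)) ξ.1) with h | h
        · exact h
        · rw [h] at hadd; exact absurd hadd (by decide)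
  refine ⟨C₁, C₂, W', v, v + w₁, isRep_acoset _ _, isRep_acoset _ _, hdisj, hunion, hrank, ?_⟩
  -- energy inequality
  have hm0 : 0 < (Nat.card W' : ℝ) := by
    have : 0 < Nat.card W' := Nat.card_pos
    exact_mod_cast this
  set m : ℝ := (Nat.card W' : ℝ) with hm
  have hc1 : (C₁.card : ℝ) = m := by rw [hC₁, acoset_card]
  have hc2 : (C₂.card : ℝ) = m := by rw [hC₂, acoset_card]
  have hCc : (C.card : ℝ) = 2 * m := by
    rw [← hunion, Finset.card_union_of_disjoint hdisj]
    push_cast [hc1, hc2]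
    ring
  set a : ℝ := ((X ∩ C₁).card : ℝ) with ha
  set b : ℝ := ((X ∩ C₂).card : ℝ) with hb
  have hXd : Disjoint (X ∩ C₁) (X ∩ C₂) :=
    hdisj.mono (Finset.inter_subset_right) (Finset.inter_subset_right)
  have hXsplit : (X ∩ C₁) ∪ (X ∩ C₂) = X := by
    rw [← Finset.inter_union_distrib_left, hunion, Finset.inter_eq_left.mpr hX]
  have hab : a + b = (X.card : ℝ) := by
    rw [ha, hb, ← Nat.cast_add, ← Finset.card_union_of_disjoint hXd, hXsplit]
  -- Fourier coefficient identity
  have hchr1 : ∀ x ∈ X ∩ C₁, chr (x - v) ξ.1 = 1 := by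
    intro x hx
    have hx1 : x ∈ C₁ := (Finset.mem_inter.mp hx).2
    rw [hC₁, mem_acoset, mem_W'] at hx1
    show (-1 : ℝ) ^ ((dotp (x - v) ξ.1).val) = 1
    rw [hx1.2]; norm_num
  have hchr2 : ∀ x ∈ X ∩ C₂, chr (x - v) ξ.1 = -1 := by
    intro x hx
    have hx2 : x ∈ C₂ := (Finset.mem_inter.mp hx).2
    rw [hC₂, mem_acoset, mem_W'] at hx2
    have hadd : dotp (x - v) ξ.1 = dotp (x - (v + w₁)) ξ.1 + dotp w₁ ξ.1 := by
      rw [← hLd, ← hLd, ← hLd, ← map_add]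
      congr 1; abel
    rw [hx2.2, hw1, zero_add] at hadd
    show (-1 : ℝ) ^ ((dotp (x - v) ξ.1).val) = -1
    rw [hadd, ZMod.val_one]; norm_num
  have hS : (∑ x ∈ X, chr (x - v) ξ.1) = a - b := by
    rw [← hXsplit, Finset.sum_union hXd,
      Finset.sum_congr rfl hchr1, Finset.sum_congr rfl hchr2]
    simp [ha, hb, sub_eq_add_neg]
  -- lower bound on |a - b|
  have hWC : (Nat.card W : ℝ) = 2 * m := by rw [← hC.card, hCc]
  have habs : u * (2 * m) < |a - b| := by
    rw [hWC, hS] at hξ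
    rw [← lt_div_iff₀ (by linarith)]
    exact hξ
  -- conclude
  clear_value a b m
  have h1 : (u * (2 * m))^2 ≤ (a - b)^2 := by
    have h0 : 0 ≤ u * (2 * m) := by positivity
    have h2 := pow_le_pow_left₀ h0 habs.le 2
    rwa [sq_abs] at h2
  rw [hc1, hc2, hCc, ← hab, ← add_div]
  have key : (a + b)^2 + (u * (2*m))^2 ≤ 2 * (a^2 + b^2) := by
    have id1 : 2 * (a^2 + b^2) = (a + b)^2 + (a - b)^2 := by ring
    linarith
  calc (a + b)^2 / (2*m) + u^2 * (2*m)
      = ((a + b)^2 + (u * (2*m))^2) / (2*m) := by field_simp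
    _ ≤ (2 * (a^2 + b^2)) / (2*m) := by gcongr
    _ = (a^2 + b^2) / m := by field_simp

def phiU (U C : Finset (H n)) : ℝ := ((U ∩ C).card : ℝ)^2 / (C.card : ℝ)

def IsPartition (P : Finset (Finset (H n))) : Prop := ∀ x : H n, ∃! C, C ∈ P ∧ x ∈ C

lemma IsPartition.disj {P : Finset (Finset (H n))} (hP : IsPartition P)
    {C D : Finset (H n)} (hC : C ∈ P) (hD : D ∈ P) (hne : C ≠ D) : Disjoint C D := by
  rw [Finset.disjoint_left]
  intro x hxC hxD
  obtain ⟨E, -, hE⟩ := hP x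
  exact hne ((hE C ⟨hC, hxC⟩).trans (hE D ⟨hD, hxD⟩).symm)

lemma sum_inter_card {P : Finset (Finset (H n))} (hP : IsPartition P) (A : Finset (H n)) :
    ∑ C ∈ P, (A ∩ C).card = A.card := by
  have h1 : ∀ C ∈ P, (A ∩ C).card = ∑ x ∈ A, if x ∈ C then 1 else 0 := by
    intro C _
    rw [← Finset.card_filter, Finset.filter_mem_eq_inter]
  rw [Finset.sum_congr rfl h1, Finset.sum_comm]
  have h2 : ∀ x ∈ A, (∑ C ∈ P, if x ∈ C then 1 else 0) = 1 := by
    intro x _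
    obtain ⟨C₀, ⟨hC₀P, hxC₀⟩, huniq⟩ := hP x
    rw [← Finset.card_filter, Finset.card_eq_one]
    refine ⟨C₀, ?_⟩
    ext D
    simp only [Finset.mem_filter, Finset.mem_singleton]
    constructor
    · rintro ⟨hD, hxD⟩; exact huniq D ⟨hD, hxD⟩
    · rintro rfl; exact ⟨hC₀P, hxC₀⟩
  rw [Finset.sum_congr rfl h2]
  simp

lemma sum_phiU_le {P : Finset (Finset (H n))} (hP : IsPartition P) (U : Finset (H n)) :
    ∑ C ∈ P, phiU U C ≤ (U.card : ℝ) := by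
  have h1 : ∀ C ∈ P, phiU U C ≤ ((U ∩ C).card : ℝ) := by
    intro C _
    rcases Nat.eq_zero_or_pos C.card with h0 | hpos
    · rw [Finset.card_eq_zero] at h0
      simp [phiU, h0]
    · rw [phiU, div_le_iff₀ (by exact_mod_cast hpos)]
      have hle : ((U ∩ C).card : ℝ) ≤ (C.card : ℝ) := by
        exact_mod_cast Finset.card_le_card (Finset.inter_subset_right)
      have hnn : (0:ℝ) ≤ ((U ∩ C).card : ℝ) := by positivity
      nlinarith
  calc ∑ C ∈ P, phiU U C ≤ ∑ C ∈ P, ((U ∩ C).card : ℝ) := Finset.sum_le_sum h1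
    _ = (U.card : ℝ) := by rw [← Nat.cast_sum, sum_inter_card hP U]

lemma IsRep.nonempty {C : Finset (H n)} {W : Submodule (ZMod 2) (H n)} {v : H n}
    (h : IsRep C W v) : C.Nonempty := ⟨v, h.mem_base⟩

lemma IsRep.unique {C : Finset (H n)} {W W' : Submodule (ZMod 2) (H n)} {v v' : H n}
    (h : IsRep C W v) (h' : IsRep C W' v') : W = W' := by
  have key : ∀ (W₁ W₂ : Submodule (ZMod 2) (H n)) (v₁ v₂ : H n),
      IsRep C W₁ v₁ → IsRep C W₂ v₂ → W₁ ≤ W₂ := by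
    intro W₁ W₂ v₁ v₂ h₁ h₂ w hw
    have hv1 : v₁ - v₂ ∈ W₂ := (h₂ v₁).1 h₁.mem_base
    have hwv : (w + v₁) - v₂ ∈ W₂ := (h₂ _).1 ((h₁ _).2 (by simpa using hw))
    have hfin : ((w + v₁) - v₂) - (v₁ - v₂) ∈ W₂ := W₂.sub_mem hwv hv1
    simpa using hfin
  exact le_antisymm (key W W' v v' h h') (key W' W v' v h' h)

lemma aux {n : ℕ} (U : Finset (H n)) (t u : ℝ) (ht0 : 0 < t) (hu0 : 0 < u)
    (hU0 : 0 < (U.card : ℝ)) :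
    ∀ k : ℕ, ∀ P : Finset (Finset (H n)), IsPartition P →
    (∀ C ∈ P, ∃ W v, IsRep C W v ∧
      (n : ℝ) - 4 / (t * u ^ 2) + k ≤ (Module.finrank (ZMod 2) W : ℝ)) →
    ((U.card : ℝ) - ∑ C ∈ P, phiU U C < k * (t * u ^ 2 * U.card)) →
    (∃ P N : Finset (Finset (H n)), N ⊆ P ∧
      (∀ x : H n, ∃! C, C ∈ P ∧ x ∈ C) ∧
      (∀ C ∈ P, ∃ (W : Submodule (ZMod 2) (H n)) (v : H n),
        (∀ x, x ∈ C ↔ x - v ∈ W) ∧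
        (n : ℝ) - 4 / (t * u ^ 2) ≤ (Module.finrank (ZMod 2) W : ℝ) ∧
        (C ∉ N → relUniNorm (U ∩ C) W v ≤ u)) ∧
      (∑ C ∈ N, (C.card : ℝ)) / (Fintype.card (H n) : ℝ) ≤ t * density U) := by
  intro k
  induction k with
  | zero =>
    intro P hP hdim hE
    exfalso
    have h1 := sum_phiU_le hP U
    push_cast at hE
    linarith
  | succ k ih =>
    intro P hP hdim hE
    set Bad : Finset (Finset (H n)) :=
      P.filter (fun C => ¬ ∃ W v, IsRep C W v ∧ relUniNorm (U ∩ C) W v ≤ u) with hBad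
    by_cases hmass : (∑ C ∈ Bad, (C.card : ℝ)) ≤ t * U.card
    · -- stop: P with N = Bad works
      refine ⟨P, Bad, Finset.filter_subset _ _, hP, ?_, ?_⟩
      · intro C hCP
        obtain ⟨W₀, v₀, hrep₀, hdim₀⟩ := hdim C hCP
        by_cases hCB : C ∈ Bad
        · exact ⟨W₀, v₀, hrep₀, by push_cast at hdim₀ ⊢; linarith [(Nat.cast_nonneg k : (0:ℝ) ≤ k)],
            fun h => absurd hCB h⟩
        · have hgood : ∃ W v, IsRep C W v ∧ relUniNorm (U ∩ C) W v ≤ u := by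
            by_contra hcon
            exact hCB (Finset.mem_filter.mpr ⟨hCP, hcon⟩)
          obtain ⟨W, v, hrep, hnorm⟩ := hgood
          refine ⟨W, v, hrep, ?_, fun _ => hnorm⟩
          rw [hrep.unique hrep₀]
          push_cast at hdim₀ ⊢
          linarith [(Nat.cast_nonneg k : (0:ℝ) ≤ k)]
      · rw [density, ← mul_div_assoc]
        have hH : (0:ℝ) < (Fintype.card (H n) : ℝ) := by
          exact_mod_cast Fintype.card_pos
        gcongr
    · -- split all bad cells
      push_neg at hmass
      have hBadP : Bad ⊆ P := Finset.filter_subset _ _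
      have hstep : ∀ C ∈ Bad, ∃ (C₁ C₂ : Finset (H n)),
          (∃ W₁ v₁, IsRep C₁ W₁ v₁ ∧
            (n : ℝ) - 4 / (t * u ^ 2) + k ≤ (Module.finrank (ZMod 2) W₁ : ℝ)) ∧
          (∃ W₂ v₂, IsRep C₂ W₂ v₂ ∧
            (n : ℝ) - 4 / (t * u ^ 2) + k ≤ (Module.finrank (ZMod 2) W₂ : ℝ)) ∧
          Disjoint C₁ C₂ ∧ C₁ ∪ C₂ = C ∧
          phiU U C + u ^ 2 * C.card ≤ phiU U C₁ + phiU U C₂ := by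
        intro C hCB
        have hCP : C ∈ P := (Finset.mem_filter.mp hCB).1
        obtain ⟨W, v, hrep, hdimW⟩ := hdim C hCP
        have hbadC : u < relUniNorm (U ∩ C) W v := by
          have h := (Finset.mem_filter.mp hCB).2
          push_neg at h
          exact h W v hrep
        obtain ⟨C₁, C₂, W', v₁, v₂, hr1, hr2, hdis, huni, hrk, hen⟩ :=
          split hrep (Finset.inter_subset_right) hu0 hbadC
        have hdimp : (n : ℝ) - 4 / (t * u ^ 2) + k ≤ (Module.finrank (ZMod 2) W' : ℝ) := by
          have hcast : (Module.finrank (ZMod 2) W' : ℝ) + 1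
              = (Module.finrank (ZMod 2) W : ℝ) := by exact_mod_cast hrk
          push_cast at hdimW ⊢
          linarith
        refine ⟨C₁, C₂, ⟨W', v₁, hr1, hdimp⟩, ⟨W', v₂, hr2, hdimp⟩, hdis, huni, ?_⟩
        have hsub1 : C₁ ⊆ C := huni ▸ Finset.subset_union_left
        have hsub2 : C₂ ⊆ C := huni ▸ Finset.subset_union_right
        have hi1 : U ∩ C₁ = (U ∩ C) ∩ C₁ := by
          rw [Finset.inter_assoc, Finset.inter_eq_right.mpr hsub1]
        have hi2 : U ∩ C₂ = (U ∩ C) ∩ C₂ := by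
          rw [Finset.inter_assoc, Finset.inter_eq_right.mpr hsub2]
        rw [phiU, phiU, phiU, hi1, hi2]
        exact hen
      choose g₁ g₂ hg using hstep
      set pieces : Finset (Finset (H n)) :=
        Bad.attach.biUnion (fun C => {g₁ C.1 C.2, g₂ C.1 C.2}) with hpieces
      set P' := (P \ Bad) ∪ pieces with hP'
      have hpar : ∀ D ∈ pieces, ∃ C, ∃ hC : C ∈ Bad, D = g₁ C hC ∨ D = g₂ C hC := by
        intro D hD
        rw [hpieces, Finset.mem_biUnion] at hD
        obtain ⟨C, hC, hD⟩ := hD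
        refine ⟨C.1, C.2, ?_⟩
        rcases Finset.mem_insert.mp hD with h | h
        · exact Or.inl h
        · exact Or.inr (Finset.mem_singleton.mp h)
      have hpsub : ∀ C (hC : C ∈ Bad), g₁ C hC ⊆ C ∧ g₂ C hC ⊆ C := by
        intro C hC
        obtain ⟨-, -, -, huni, -⟩ := hg C hC
        constructor
        · intro x hx
          rw [← huni]
          exact Finset.mem_union_left _ hx
        · intro x hx
          rw [← huni]
          exact Finset.mem_union_right _ hx
      have hpne : ∀ C (hC : C ∈ Bad), (g₁ C hC).Nonempty ∧ (g₂ C hC).Nonempty := by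
        intro C hC
        obtain ⟨⟨W₁, v₁, hr1, -⟩, ⟨W₂, v₂, hr2, -⟩, -⟩ := hg C hC
        exact ⟨hr1.nonempty, hr2.nonempty⟩
      have hclaim : ∀ x : H n, ∀ D ∈ P', x ∈ D → ∀ C, C ∈ P → x ∈ C →
          ((C ∉ Bad ∧ D = C) ∨ ∃ hC : C ∈ Bad, D = g₁ C hC ∨ D = g₂ C hC) := by
        intro x D hD hxD C hCP hxC
        rw [hP', Finset.mem_union] at hD
        rcases hD with hD | hD
        · obtain ⟨hDP, hDB⟩ := Finset.mem_sdiff.mp hD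
          have hDC : D = C := by
            by_contra hne
            exact absurd hxC (Finset.disjoint_left.mp (hP.disj hDP hCP hne) hxD)
          subst hDC
          exact Or.inl ⟨hDB, rfl⟩
        · obtain ⟨C', hC', hD'⟩ := hpar D hD
          have hsubD : D ⊆ C' := by
            rcases hD' with rfl | rfl
            exacts [(hpsub C' hC').1, (hpsub C' hC').2]
          have hxC' : x ∈ C' := hsubD hxD
          have hCC : C' = C := by
            by_contra hne
            exact absurd hxC (Finset.disjoint_left.mp (hP.disj (hBadP hC') hCP hne) hxC')
          subst hCC
          exact Or.inr ⟨hC', hD'⟩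
      have hP'part : IsPartition P' := by
        intro x
        obtain ⟨C, ⟨hCP, hxC⟩, hCuniq⟩ := hP x
        by_cases hCB : C ∈ Bad
        · obtain ⟨-, -, hdis, huni, -⟩ := hg C hCB
          have hmemp : ∀ D ∈ ({g₁ C hCB, g₂ C hCB} : Finset (Finset (H n))), D ∈ P' := by
            intro D hD
            rw [hP', Finset.mem_union, hpieces]
            exact Or.inr (Finset.mem_biUnion.mpr ⟨⟨C, hCB⟩, Finset.mem_attach _ _, hD⟩)
          have hxu : x ∈ g₁ C hCB ∪ g₂ C hCB := by rw [huni]; exact hxC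
          rcases Finset.mem_union.mp hxu with hx1 | hx2
          · refine ⟨g₁ C hCB, ⟨hmemp _ (Finset.mem_insert_self _ _), hx1⟩, ?_⟩
            rintro D ⟨hDP', hxD⟩
            rcases hclaim x D hDP' hxD C hCP hxC with ⟨hCnB, -⟩ | ⟨hC, hD⟩
            · exact absurd hCB hCnB
            · rcases hD with rfl | rfl
              · rfl
              · exact absurd hx1 (Finset.disjoint_right.mp hdis hxD)
          · refine ⟨g₂ C hCB, ⟨hmemp _ (Finset.mem_insert_of_mem (Finset.mem_singleton_self _)), hx2⟩, ?_⟩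
            rintro D ⟨hDP', hxD⟩
            rcases hclaim x D hDP' hxD C hCP hxC with ⟨hCnB, -⟩ | ⟨hC, hD⟩
            · exact absurd hCB hCnB
            · rcases hD with rfl | rfl
              · exact absurd hx2 (Finset.disjoint_left.mp hdis hxD)
              · rfl
        · refine ⟨C, ⟨?_, hxC⟩, ?_⟩
          · rw [hP', Finset.mem_union]
            exact Or.inl (Finset.mem_sdiff.mpr ⟨hCP, hCB⟩)
          · rintro D ⟨hDP', hxD⟩
            rcases hclaim x D hDP' hxD C hCP hxC with ⟨-, h⟩ | ⟨hC, -⟩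
            · exact h
            · exact absurd hC hCB
      have hsum : ∀ f : Finset (H n) → ℝ,
          ∑ D ∈ P', f D = ∑ C ∈ P \ Bad, f C
            + ∑ C ∈ Bad.attach, (f (g₁ C.1 C.2) + f (g₂ C.1 C.2)) := by
        intro f
        have hdisjU : Disjoint (P \ Bad) pieces := by
          rw [Finset.disjoint_left]
          intro D hD hDp
          obtain ⟨hDP, hDB⟩ := Finset.mem_sdiff.mp hD
          obtain ⟨C', hC', hD'⟩ := hpar D hDp
          have hsubD : D ⊆ C' := by
            rcases hD' with rfl | rfl
            exacts [(hpsub C' hC').1, (hpsub C' hC').2]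
          have hDne : D.Nonempty := by
            rcases hD' with rfl | rfl
            exacts [(hpne C' hC').1, (hpne C' hC').2]
          obtain ⟨x, hx⟩ := hDne
          have hDC : D = C' := by
            by_contra hne
            exact absurd (hsubD hx) (Finset.disjoint_left.mp (hP.disj hDP (hBadP hC') hne) hx)
          exact hDB (hDC ▸ hC')
        have hpd : (↑Bad.attach : Set {x // x ∈ Bad}).PairwiseDisjoint
            (fun C : {x // x ∈ Bad} => ({g₁ C.1 C.2, g₂ C.1 C.2} : Finset (Finset (H n)))) := by
          intro a _ b _ hab
          simp only [Function.onFun]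
          rw [Finset.disjoint_left]
          intro D hDa hDb
          have hab1 : a.1 ≠ b.1 := fun h => hab (Subtype.ext h)
          have hsa : D ⊆ a.1 := by
            rcases Finset.mem_insert.mp hDa with rfl | h
            · exact (hpsub a.1 a.2).1
            · rw [Finset.mem_singleton.mp h]; exact (hpsub a.1 a.2).2
          have hsb : D ⊆ b.1 := by
            rcases Finset.mem_insert.mp hDb with rfl | h
            · exact (hpsub b.1 b.2).1
            · rw [Finset.mem_singleton.mp h]; exact (hpsub b.1 b.2).2
          have hDne : D.Nonempty := by
            rcases Finset.mem_insert.mp hDa with rfl | h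
            · exact (hpne a.1 a.2).1
            · rw [Finset.mem_singleton.mp h]; exact (hpne a.1 a.2).2
          obtain ⟨x, hx⟩ := hDne
          exact absurd (hsb hx)
            (Finset.disjoint_left.mp (hP.disj (hBadP a.2) (hBadP b.2) hab1) (hsa hx))
        rw [hP', Finset.sum_union hdisjU, hpieces, Finset.sum_biUnion hpd]
        congr 1
        refine Finset.sum_congr rfl ?_
        rintro C -
        obtain ⟨-, -, hdis, -, -⟩ := hg C.1 C.2
        have hne12 : g₁ C.1 C.2 ≠ g₂ C.1 C.2 := by
          intro heq
          obtain ⟨x, hx⟩ := (hpne C.1 C.2).1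
          have hx2 : x ∈ g₂ C.1 C.2 := heq ▸ hx
          exact absurd hx2 (Finset.disjoint_left.mp hdis hx)
        rw [Finset.sum_pair hne12]
      have hdim' : ∀ C ∈ P', ∃ W v, IsRep C W v ∧
          (n : ℝ) - 4 / (t * u ^ 2) + k ≤ (Module.finrank (ZMod 2) W : ℝ) := by
        intro D hD
        rw [hP', Finset.mem_union] at hD
        rcases hD with hD | hD
        · obtain ⟨W, v, hrep, hdimW⟩ := hdim D (Finset.mem_sdiff.mp hD).1
          refine ⟨W, v, hrep, ?_⟩
          push_cast at hdimW ⊢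
          linarith
        · obtain ⟨C', hC', hD'⟩ := hpar D hD
          obtain ⟨⟨W₁, v₁, hr1, hd1⟩, ⟨W₂, v₂, hr2, hd2⟩, -⟩ := hg C' hC'
          rcases hD' with rfl | rfl
          exacts [⟨W₁, v₁, hr1, hd1⟩, ⟨W₂, v₂, hr2, hd2⟩]
      have hE' : (U.card : ℝ) - ∑ C ∈ P', phiU U C < k * (t * u ^ 2 * U.card) := by
        have h1 : ∑ C ∈ P \ Bad, phiU U C + ∑ C ∈ Bad, phiU U C = ∑ C ∈ P, phiU U C :=
          Finset.sum_sdiff hBadP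
        have h2 : ∑ C ∈ Bad.attach, (phiU U C.1 + u ^ 2 * (C.1.card : ℝ))
            ≤ ∑ C ∈ Bad.attach, (phiU U (g₁ C.1 C.2) + phiU U (g₂ C.1 C.2)) := by
          refine Finset.sum_le_sum ?_
          rintro C -
          exact (hg C.1 C.2).2.2.2.2
        have h3 : ∑ C ∈ Bad.attach, (phiU U C.1 + u ^ 2 * (C.1.card : ℝ))
            = ∑ C ∈ Bad, phiU U C + u ^ 2 * ∑ C ∈ Bad, (C.card : ℝ) := by
          rw [Finset.sum_add_distrib, Finset.mul_sum]
          congr 1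
          · exact Finset.sum_attach _ _
          · rw [← Finset.sum_attach Bad (fun C => u ^ 2 * (C.card : ℝ))]
        have h4 : u ^ 2 * (t * (U.card : ℝ)) < u ^ 2 * ∑ C ∈ Bad, (C.card : ℝ) :=
          mul_lt_mul_of_pos_left hmass (by positivity)
        rw [hsum]
        push_cast at hE
        linarith
      exact ih P' hP'part hdim' hE'

end Stmt15

/-- Energy increment: `F_2^n` can be partitioned into affine subspaces of
dimension at least `n - 4/(tu²)`, such that off an exceptional collection `N`
of total density at most `t·δ_U`, the set `U` is `u`-uniform on each cell. -/
theorem stmt_15 {n : ℕ} (U : Finset (H n)) (t u : ℝ)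
    (ht0 : 0 < t) (ht1 : t < 1) (hu0 : 0 < u) (hu1 : u < 1)
    (hδ : 0 < density U)
    (hn : 10 / (t * u ^ 2) ≤ (n : ℝ)) :
    ∃ P N : Finset (Finset (H n)), N ⊆ P ∧
      (∀ x : H n, ∃! C, C ∈ P ∧ x ∈ C) ∧
      (∀ C ∈ P, ∃ (W : Submodule (ZMod 2) (H n)) (v : H n),
        (∀ x, x ∈ C ↔ x - v ∈ W) ∧
        (n : ℝ) - 4 / (t * u ^ 2) ≤ (Module.finrank (ZMod 2) W : ℝ) ∧
        (C ∉ N → relUniNorm (U ∩ C) W v ≤ u)) ∧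
      (∑ C ∈ N, (C.card : ℝ)) / (Fintype.card (H n) : ℝ) ≤ t * density U := by
  classical
  have htu : 0 < t * u ^ 2 := by positivity
  have hH : (0:ℝ) < (Fintype.card (H n) : ℝ) := by exact_mod_cast Fintype.card_pos
  have hU0 : 0 < (U.card : ℝ) := by
    rw [density] at hδ
    by_contra h
    push_neg at h
    have h0 : (U.card : ℝ) = 0 := le_antisymm h (by positivity)
    rw [h0] at hδ
    simp at hδ
  set K : ℕ := ⌈1 / (t * u ^ 2)⌉₊ with hK
  have hKge : 1 / (t * u ^ 2) ≤ (K : ℝ) := Nat.le_ceil _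
  have hKle : (K : ℝ) ≤ 4 / (t * u ^ 2) := by
    have h1 : (K : ℝ) < 1 / (t * u ^ 2) + 1 := Nat.ceil_lt_add_one (by positivity)
    have h2 : t * u ^ 2 < 1 := by nlinarith
    have h3 : 1 / (t * u ^ 2) + 1 ≤ 4 / (t * u ^ 2) := by
      rw [div_add' _ _ _ (ne_of_gt htu), div_le_div_iff₀ htu htu]
      nlinarith
    linarith
  have hpart0 : Stmt15.IsPartition ({(Finset.univ : Finset (H n))} : Finset (Finset (H n))) := by
    intro x
    refine ⟨Finset.univ, ⟨Finset.mem_singleton_self _, Finset.mem_univ x⟩, ?_⟩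
    rintro D ⟨hD, -⟩
    exact Finset.mem_singleton.mp hD
  have hdim0 : ∀ C ∈ ({(Finset.univ : Finset (H n))} : Finset (Finset (H n))),
      ∃ W v, Stmt15.IsRep C W v ∧
        (n : ℝ) - 4 / (t * u ^ 2) + K ≤ (Module.finrank (ZMod 2) W : ℝ) := by
    intro C hC
    rw [Finset.mem_singleton] at hC
    subst hC
    refine ⟨⊤, 0, fun x => ⟨fun _ => Submodule.mem_top, fun _ => Finset.mem_univ x⟩, ?_⟩
    have hrk : Module.finrank (ZMod 2) (⊤ : Submodule (ZMod 2) (H n)) = n := by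
      rw [finrank_top, Module.finrank_pi, Fintype.card_fin]
    rw [hrk]
    linarith
  have hE0 : (U.card : ℝ) - ∑ C ∈ ({(Finset.univ : Finset (H n))} : Finset (Finset (H n))),
      Stmt15.phiU U C < K * (t * u ^ 2 * U.card) := by
    rw [Finset.sum_singleton]
    have h1 : Stmt15.phiU U Finset.univ = (U.card : ℝ)^2 / (Fintype.card (H n) : ℝ) := by
      rw [Stmt15.phiU, Finset.inter_univ, Finset.card_univ]
    have h2 : 0 < (U.card : ℝ)^2 / (Fintype.card (H n) : ℝ) := by positivity
    have h3 : 1 ≤ (K : ℝ) * (t * u ^ 2) := by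
      rw [div_le_iff₀ htu] at hKge
      linarith
    have h4 : (U.card : ℝ) ≤ K * (t * u ^ 2 * U.card) := by
      have h5 : 1 * (U.card : ℝ) ≤ ((K : ℝ) * (t * u ^ 2)) * U.card :=
        mul_le_mul_of_nonneg_right h3 hU0.le
      calc (U.card : ℝ) = 1 * (U.card : ℝ) := (one_mul _).symm
        _ ≤ ((K : ℝ) * (t * u ^ 2)) * U.card := h5
        _ = K * (t * u ^ 2 * U.card) := by ring
    rw [h1]
    linarith
  exact Stmt15.aux U t u ht0 hu0 hU0 K _ hpart0 hdim0 hE0
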